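/- Let A be a closed subalgebra of a C*-algebra E such that A generates E as a C*-algebra, and suppose A has a contractive approximate identity (e_α). Then (e_α) is also an approximate identity for E; that is, e_α c → c and c e_α → c for every c ∈ E. -/
import Mathlib

open Filter Topology

section Aux

variable {E : Type*} [NonUnitalCStarAlgebra E]

lemma cai_key_ineq (b x : E) (hx : ‖x‖ ≤ 1) :
    ‖x * b - b‖ ^ 2 ≤ 2 * ‖star b * b - star b * (x * b)‖ := by
  letI : PartialOrder (Unitization ℂ E) := CStarAlgebra.spectralOrder _
  letI : StarOrderedRing (Unitization ℂ E) := CStarAlgebra.spectralOrderedRing _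
  set X : Unitization ℂ E := (x : Unitization ℂ E) with hX
  set B : Unitization ℂ E := (b : Unitization ℂ E) with hB
  have hXnorm : ‖X‖ ≤ 1 := by rwa [hX, Unitization.norm_inr]
  have hpos : (0 : Unitization ℂ E) ≤ 1 - star X * X := by
    rw [sub_nonneg, ← CStarAlgebra.norm_le_one_iff_of_nonneg (star X * X) (star_mul_self_nonneg X),
      CStarRing.norm_star_mul_self]
    nlinarith [norm_nonneg X]
  have hord : (1 - star X) * (1 - X) ≤ (1 - X) + (1 - star X) := by
    rw [← sub_nonneg]
    have h : (1 - X) + (1 - star X) - (1 - star X) * (1 - X) = 1 - star X * X := by noncomm_ring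
    rw [h]; exact hpos
  have hconj := star_left_conjugate_le_conjugate hord B
  set z : Unitization ℂ E := (1 - X) * B with hz
  have hz1 : star z * z = star B * ((1 - star X) * (1 - X)) * B := by
    rw [hz]; simp only [star_mul, star_sub, star_one]; noncomm_ring
  have hle : star z * z ≤ star B * ((1 - X) + (1 - star X)) * B := hz1 ▸ hconj
  have hn1 : ‖star z * z‖ ≤ ‖star B * ((1 - X) + (1 - star X)) * B‖ :=
    CStarAlgebra.norm_le_norm_of_nonneg_of_le (star_mul_self_nonneg z) hle
  have hznorm : ‖z‖ = ‖x * b - b‖ := by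
    rw [hz, hX, hB, sub_mul, one_mul, ← Unitization.inr_mul, ← Unitization.inr_sub,
      Unitization.norm_inr, norm_sub_rev]
  have hrhs : star B * ((1 - X) + (1 - star X)) * B
      = ((star b * b - star b * (x * b) : E) : Unitization ℂ E)
        + ((star b * b - star b * (star x * b) : E) : Unitization ℂ E) := by
    rw [hX, hB]
    simp only [Unitization.inr_sub, Unitization.inr_mul, Unitization.inr_star]
    noncomm_ring
  have hstar2 : ‖star b * b - star b * (star x * b)‖ = ‖star b * b - star b * (x * b)‖ := by
    rw [← norm_star]
    congr 1
    simp only [star_sub, star_mul, star_star]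
    noncomm_ring
  calc ‖x * b - b‖ ^ 2 = ‖star z * z‖ := by
        rw [CStarRing.norm_star_mul_self, hznorm, sq]
    _ ≤ ‖star B * ((1 - X) + (1 - star X)) * B‖ := hn1
    _ ≤ 2 * ‖star b * b - star b * (x * b)‖ := by
        rw [hrhs]
        refine (norm_add_le _ _).trans ?_
        rw [Unitization.norm_inr, Unitization.norm_inr, hstar2]
        linarith

/-- From a square-norm bound tending to zero, deduce convergence. -/
lemma tendsto_of_sq_le {ι : Type*} {l : Filter ι} {f g : ι → ℝ}
    (h0 : ∀ i, 0 ≤ f i) (hle : ∀ i, f i ^ 2 ≤ g i) (hg : Tendsto g l (𝓝 0)) :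
    Tendsto f l (𝓝 0) := by
  have hsq : Tendsto (fun i => f i ^ 2) l (𝓝 0) :=
    squeeze_zero (fun i => by positivity) hle hg
  have := (Real.continuous_sqrt.tendsto 0).comp hsq
  simp only [Function.comp_def, Real.sqrt_zero] at this
  refine this.congr fun i => ?_
  exact Real.sqrt_sq (h0 i)

lemma tendsto_mul_left_of_closure {ι : Type*} {l : Filter ι} {e : ι → E}
    (he : ∀ i, ‖e i‖ ≤ 1) {s : Set E} {c : E} (hc : c ∈ closure s)
    (hs : ∀ d ∈ s, Tendsto (fun i => e i * d) l (𝓝 d)) :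
    Tendsto (fun i => e i * c) l (𝓝 c) := by
  rw [Metric.tendsto_nhds]
  intro ε hε
  obtain ⟨d, hds, hdc⟩ := Metric.mem_closure_iff.mp hc (ε / 3) (by positivity)
  have h2 := Metric.tendsto_nhds.mp (hs d hds) (ε / 3) (by positivity)
  filter_upwards [h2] with i hi
  have h3 : dist (e i * c) (e i * d) ≤ dist c d := by
    rw [dist_eq_norm, ← mul_sub, dist_eq_norm]
    calc ‖e i * (c - d)‖ ≤ ‖e i‖ * ‖c - d‖ := norm_mul_le _ _
      _ ≤ 1 * ‖c - d‖ := by gcongr; exact he i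
      _ = ‖c - d‖ := one_mul _
  calc dist (e i * c) c ≤ dist (e i * c) (e i * d) + dist (e i * d) d + dist d c :=
        dist_triangle4 _ _ _ _
    _ < ε / 3 + ε / 3 + ε / 3 := by
        have h4 : dist d c < ε / 3 := by rwa [dist_comm]
        linarith
    _ = ε := by ring

lemma tendsto_mul_right_of_closure {ι : Type*} {l : Filter ι} {e : ι → E}
    (he : ∀ i, ‖e i‖ ≤ 1) {s : Set E} {c : E} (hc : c ∈ closure s)
    (hs : ∀ d ∈ s, Tendsto (fun i => d * e i) l (𝓝 d)) :
    Tendsto (fun i => c * e i) l (𝓝 c) := by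
  rw [Metric.tendsto_nhds]
  intro ε hε
  obtain ⟨d, hds, hdc⟩ := Metric.mem_closure_iff.mp hc (ε / 3) (by positivity)
  have h2 := Metric.tendsto_nhds.mp (hs d hds) (ε / 3) (by positivity)
  filter_upwards [h2] with i hi
  have h3 : dist (c * e i) (d * e i) ≤ dist c d := by
    rw [dist_eq_norm, ← sub_mul, dist_eq_norm]
    calc ‖(c - d) * e i‖ ≤ ‖c - d‖ * ‖e i‖ := norm_mul_le _ _
      _ ≤ ‖c - d‖ * 1 := by gcongr; exact he i
      _ = ‖c - d‖ := mul_one _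
  calc dist (c * e i) c ≤ dist (c * e i) (d * e i) + dist (d * e i) d + dist d c :=
        dist_triangle4 _ _ _ _
    _ < ε / 3 + ε / 3 + ε / 3 := by
        have h4 : dist d c < ε / 3 := by rwa [dist_comm]
        linarith
    _ = ε := by ring

end Aux

/-- let `A` be a norm-closed subalgebra of a C*-algebra `E` which generates `E`
as a C*-algebra, and suppose `A` has a contractive approximate identity `(e_α)`.  Then
`(e_α)` is an approximate identity for `E`: `e_α c → c` and `c e_α → c` for every `c ∈ E`. -/
theorem cai_of_generating_subalgebra_is_ai
    {E : Type*} [NonUnitalCStarAlgebra E]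
    (A : NonUnitalSubalgebra ℂ E) (hA : IsClosed (A : Set E))
    (hgen : closure (↑(NonUnitalStarAlgebra.adjoin ℂ (A : Set E)) : Set E) = Set.univ)
    {ι : Type*} (l : Filter ι) [l.NeBot] (e : ι → E)
    (heA : ∀ i, e i ∈ A) (he : ∀ i, ‖e i‖ ≤ 1)
    (hcai_left : ∀ a ∈ A, Tendsto (fun i => e i * a) l (𝓝 a))
    (hcai_right : ∀ a ∈ A, Tendsto (fun i => a * e i) l (𝓝 a)) :
    ∀ c : E, Tendsto (fun i => e i * c) l (𝓝 c) ∧ Tendsto (fun i => c * e i) l (𝓝 c) := by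
  -- Step 1: `(e_α)` works against `star a` for `a ∈ A`.
  have hstar_left : ∀ a ∈ A, Tendsto (fun i => e i * star a) l (𝓝 (star a)) := by
    intro a ha
    rw [tendsto_iff_norm_sub_tendsto_zero]
    refine tendsto_of_sq_le (fun i => norm_nonneg _)
      (fun i => cai_key_ineq (star a) (e i) (he i)) ?_
    -- `2 * ‖a * star a - a * (e i * star a)‖ → 0` since `a * e i → a`.
    rw [star_star]
    have h1 : Tendsto (fun i => a * e i * star a) l (𝓝 (a * star a)) :=
      (hcai_right a ha).mul_const (star a)
    have h2 := (tendsto_const_nhds (x := a * star a)).sub h1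
    rw [sub_self] at h2
    have h3 := (h2.norm.const_mul 2)
    simpa [mul_assoc] using h3
  have hstar_right : ∀ a ∈ A, Tendsto (fun i => star a * e i) l (𝓝 (star a)) := by
    intro a ha
    rw [tendsto_iff_norm_sub_tendsto_zero]
    have key : ∀ i, ‖star a * e i - star a‖ ^ 2
        ≤ 2 * ‖star a * a - star a * star (e i) * a‖ := by
      intro i
      have h0 : ‖star a * e i - star a‖ = ‖star (e i) * a - a‖ := by
        rw [← norm_star, star_sub, star_mul, star_star]
      rw [h0]
      simpa [mul_assoc] using cai_key_ineq a (star (e i)) (by rw [norm_star]; exact he i)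
    refine tendsto_of_sq_le (fun i => norm_nonneg _) key ?_
    have h1 : Tendsto (fun i => star a * (e i * a)) l (𝓝 (star a * a)) :=
      (hcai_left a ha).const_mul (star a)
    have h2 := h1.star
    simp only [star_mul, star_star, ← mul_assoc] at h2
    have h3 := (tendsto_const_nhds (x := star a * a)).sub h2
    rw [sub_self] at h3
    simpa using h3.norm.const_mul 2
  -- Step 2: `(e_α)` works against everything in the star subalgebra generated by `A`.
  have hadj : ∀ d ∈ NonUnitalStarAlgebra.adjoin ℂ (A : Set E),
      Tendsto (fun i => e i * d) l (𝓝 d) ∧ Tendsto (fun i => d * e i) l (𝓝 d) := by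
    intro d hd
    have hd' : d ∈ NonUnitalAlgebra.adjoin ℂ ((A : Set E) ∪ star (A : Set E)) := hd
    clear hd
    induction hd' using NonUnitalAlgebra.adjoin_induction with
    | mem x hx =>
      rcases hx with hx | hx
      · exact ⟨hcai_left x hx, hcai_right x hx⟩
      · rw [Set.mem_star] at hx
        have h1 := hstar_left (star x) hx
        have h2 := hstar_right (star x) hx
        rw [star_star] at h1 h2
        exact ⟨h1, h2⟩
    | add x y hx hy ihx ihy =>
      constructor
      · have := ihx.1.add ihy.1
        refine this.congr fun i => by rw [mul_add]
      · have := ihx.2.add ihy.2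
        refine this.congr fun i => by rw [add_mul]
    | zero => simp
    | mul x y hx hy ihx ihy =>
      constructor
      · have := ihx.1.mul_const y
        refine this.congr fun i => by rw [mul_assoc]
      · have := ihy.2.const_mul x
        refine this.congr fun i => by rw [mul_assoc]
    | smul r x hx ihx =>
      constructor
      · have := ihx.1.const_smul r
        refine this.congr fun i => by rw [mul_smul_comm]
      · have := ihx.2.const_smul r
        refine this.congr fun i => by rw [smul_mul_assoc]
  -- Step 3: pass to the closure.
  intro c
  have hc : c ∈ closure (↑(NonUnitalStarAlgebra.adjoin ℂ (A : Set E)) : Set E) := by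
    rw [hgen]; trivial
  exact ⟨tendsto_mul_left_of_closure he hc fun d hd => (hadj d hd).1,
    tendsto_mul_right_of_closure he hc fun d hd => (hadj d hd).2⟩
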